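/- Let μ be a probability measure on ℂ that is radially symmetric about the origin, with radial cumulative distribution function F_R(r) = μ({x : |x| ≤ r}). Then for every nonzero z ∈ ℂ such that |z| is a continuity point of F_R, the Cauchy–Stieltjes transform satisfies m_μ(z) = F_R(|z|) / z, where m_μ(z) = ∫_ℂ 1/(z - x) dμ(x). Moreover, if 0 is a continuity point of F_R then m_μ(0) = 0. -/

import Mathlib

open MeasureTheory

open Metric Complex intervalIntegral Real Set Filter

private lemma circleAvg (z x : ℂ) (hne : ‖x‖ ≠ ‖z‖) :
    (∫ θ in (0:ℝ)..(2*π), (z - Complex.exp (θ * Complex.I) * x)⁻¹) =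
      if ‖x‖ < ‖z‖ then (2*π)/z else 0 := by
  have hx : ∀ θ : ℝ, Complex.exp (θ * Complex.I) * x = circleMap 0 ‖x‖ (θ + Complex.arg x) := by
    intro θ
    rw [circleMap, zero_add]
    conv_lhs => rw [← Complex.norm_mul_exp_arg_mul_I x]
    rw [← mul_assoc, mul_comm (Complex.exp _) ((‖x‖ : ℂ)), mul_assoc, ← Complex.exp_add]
    push_cast
    ring_nf
  have h1 : (∫ θ in (0:ℝ)..(2*π), (z - Complex.exp (θ * Complex.I) * x)⁻¹)
      = ∫ θ in (0:ℝ)..(2*π), (z - circleMap 0 ‖x‖ θ)⁻¹ := by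
    simp_rw [hx]
    rw [intervalIntegral.integral_comp_add_right (fun θ => (z - circleMap 0 ‖x‖ θ)⁻¹)]
    have hper : Function.Periodic (fun θ => (z - circleMap 0 ‖x‖ θ)⁻¹) (2*π) := fun θ => by
      simp only [periodic_circleMap 0 ‖x‖ θ]
    have := hper.intervalIntegral_add_eq (Complex.arg x) 0
    simpa [add_comm] using this
  rw [h1]
  rcases eq_or_lt_of_le (norm_nonneg x) with h0 | hR
  · -- x has norm zero
    have hz : 0 < ‖z‖ := lt_of_le_of_ne (norm_nonneg z) (h0 ▸ hne)
    rw [if_pos (h0 ▸ hz)]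
    simp only [← h0, circleMap_zero_radius, Function.const_apply, sub_zero]
    rw [intervalIntegral.integral_const, sub_zero, Complex.real_smul, div_eq_mul_inv]
    push_cast
    ring
  · set R := ‖x‖ with hRdef
    have hzR : ‖z‖ ≠ R := fun h => hne (h ▸ rfl)
    have key : (∫ θ in (0:ℝ)..(2*π), (z - circleMap 0 R θ)⁻¹)
        = ∮ ζ in C(0, R), (ζ * Complex.I)⁻¹ * (z - ζ)⁻¹ := by
      rw [circleIntegral]
      apply intervalIntegral.integral_congr
      intro θ _
      have hζ : circleMap 0 R θ ≠ 0 := circleMap_ne_center hR.ne'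
      simp only [deriv_circleMap, smul_eq_mul]
      rw [← mul_assoc, mul_inv_cancel₀ (mul_ne_zero hζ Complex.I_ne_zero), one_mul]
    rw [key]
    rcases eq_or_ne z 0 with rfl | hz
    · -- z = 0 : integral of ζ^(-2) (up to constant)
      rw [if_neg (by simp [hR.le])]
      have hcong : (∮ ζ in C(0, R), (ζ * Complex.I)⁻¹ * ((0:ℂ) - ζ)⁻¹)
          = ∮ ζ in C(0, R), (-Complex.I⁻¹) • (ζ - 0) ^ (-2 : ℤ) := by
        apply circleIntegral.integral_congr hR.le
        intro ζ hζ
        have hζ0 : ζ ≠ 0 := by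
          simp only [mem_sphere_iff_norm, sub_zero] at hζ
          exact fun h => hR.ne' (by rw [← hζ, h, norm_zero])
        show (ζ * Complex.I)⁻¹ * ((0:ℂ) - ζ)⁻¹ = -Complex.I⁻¹ • (ζ - 0) ^ (-2 : ℤ)
        have h2 : ζ * Complex.I * ((0:ℂ) - ζ) = -(Complex.I * ζ ^ 2) := by ring
        rw [← mul_inv, h2, smul_eq_mul, sub_zero, inv_neg, mul_inv, zpow_neg]
        norm_num
      rw [hcong, circleIntegral.integral_smul,
        circleIntegral.integral_sub_zpow_of_ne (by decide) 0 0 R, smul_zero]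
    · -- z ≠ 0 : partial fractions
      have hzsphere : z ∉ sphere (0:ℂ) |R| := by
        simp only [mem_sphere_iff_norm, sub_zero, abs_of_pos hR]
        exact hzR
      have h01 : CircleIntegrable (fun ζ => (ζ - 0)⁻¹) 0 R :=
        circleIntegrable_sub_inv_iff.2 (Or.inr (by
          simpa [mem_sphere_iff_norm, abs_of_pos hR] using hR.ne))
      have h02 : CircleIntegrable (fun ζ => (ζ - z)⁻¹) 0 R :=
        circleIntegrable_sub_inv_iff.2 (Or.inr hzsphere)
      have hcong : (∮ ζ in C(0, R), (ζ * Complex.I)⁻¹ * (z - ζ)⁻¹)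
          = ∮ ζ in C(0, R), (Complex.I * z)⁻¹ • ((ζ - 0)⁻¹ - (ζ - z)⁻¹) := by
        apply circleIntegral.integral_congr hR.le
        intro ζ hζ
        simp only [mem_sphere_iff_norm, sub_zero] at hζ
        have hζ0 : ζ ≠ 0 := fun h => hR.ne' (by rw [← hζ, h, norm_zero])
        have hζz : ζ ≠ z := fun h => hzR (by rw [← hζ, h])
        have h1 : z - ζ ≠ 0 := sub_ne_zero.2 (fun h => hζz h.symm)
        have h2 : ζ - z ≠ 0 := sub_ne_zero.2 hζz
        simp only [smul_eq_mul, sub_zero]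
        field_simp
        ring
      rw [hcong, circleIntegral.integral_smul, circleIntegral.integral_sub h01 h02,
        circleIntegral.integral_sub_inv_of_mem_ball (by simpa using hR)]
      rcases lt_or_gt_of_ne hne with hlt | hgt
      · -- R < ‖z‖ : second integral is zero
        rw [if_pos hlt]
        have hnz : ∀ w ∈ closedBall (0:ℂ) R, w - z ≠ 0 := by
          intro w hw
          rw [Metric.mem_closedBall, dist_zero_right] at hw
          exact sub_ne_zero.2 fun h => hlt.not_ge (h ▸ hw)
        have hzero : (∮ ζ in C(0, R), (ζ - z)⁻¹) = 0 :=
          circleIntegral_eq_zero_of_differentiable_on_off_countable hR.le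
            Set.countable_empty
            (((continuous_id.sub continuous_const).continuousOn).inv₀ hnz)
            (fun ζ hζ => (differentiableAt_id.sub_const z).inv
              (hnz ζ (ball_subset_closedBall hζ.1)))
        rw [hzero, sub_zero, smul_eq_mul]
        have : (Complex.I * z) ≠ 0 := mul_ne_zero Complex.I_ne_zero hz
        field_simp
      · -- ‖z‖ < R : second integral is 2πI
        rw [if_neg (not_lt.2 hgt.le)]
        rw [circleIntegral.integral_sub_inv_of_mem_ball
          (by simpa [Metric.mem_ball, dist_zero_right] using hgt), sub_self, smul_zero]

private lemma rot_integral {E : Type*} [NormedAddCommGroup E] [NormedSpace ℝ E]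
    (μ : Measure ℂ) [IsProbabilityMeasure μ]
    (hsym : ∀ θ : ℝ, μ.map (fun z => Complex.exp (θ * Complex.I) * z) = μ)
    (f : ℂ → E) (θ : ℝ) :
    (∫ x, f (Complex.exp (θ * Complex.I) * x) ∂μ = ∫ x, f x ∂μ) ∧
    (Integrable f μ → Integrable (fun x => f (Complex.exp (θ * Complex.I) * x)) μ) := by
  set e : ℂ ≃ᵐ ℂ := MeasurableEquiv.mulLeft₀ (Complex.exp (θ * Complex.I)) (Complex.exp_ne_zero _)
  have he : μ.map e = μ := hsym θ
  constructor
  · conv_rhs => rw [← he]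
    rw [integral_map_equiv]
    rfl
  · intro hf
    have h2 : Integrable f (μ.map e) ↔ Integrable (f ∘ e) μ := integrable_map_equiv e f
    rw [he] at h2
    exact h2.mp hf

private lemma sphereNull (μ : Measure ℂ) [IsProbabilityMeasure μ]
    (F : ℝ → ℝ) (hF : ∀ r, F r = (μ {x : ℂ | ‖x‖ ≤ r}).toReal) (r : ℝ)
    (hc : ContinuousAt F r) : μ {x : ℂ | ‖x‖ = r} = 0 := by
  have hfin : ∀ s : Set ℂ, μ s ≠ ⊤ := fun s => measure_ne_top μ s
  have hmeas : ∀ s : ℝ, MeasurableSet {x : ℂ | ‖x‖ ≤ s} := fun s =>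
    (isClosed_le continuous_norm continuous_const).measurableSet
  have key : ∀ s : ℝ, s < r → (μ {x : ℂ | ‖x‖ = r}).toReal ≤ F r - F s := by
    intro s hs
    have hsub : {x : ℂ | ‖x‖ = r} ⊆ {x : ℂ | ‖x‖ ≤ r} \ {x : ℂ | ‖x‖ ≤ s} := by
      intro x hx
      simp only [mem_setOf_eq, mem_diff] at *
      exact ⟨le_of_eq hx, fun h => absurd (hx ▸ h) (not_le.2 hs)⟩
    have hsub2 : {x : ℂ | ‖x‖ ≤ s} ⊆ {x : ℂ | ‖x‖ ≤ r} := fun x hx => le_trans hx hs.le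
    calc (μ {x : ℂ | ‖x‖ = r}).toReal
        ≤ (μ ({x : ℂ | ‖x‖ ≤ r} \ {x : ℂ | ‖x‖ ≤ s})).toReal :=
          ENNReal.toReal_mono (hfin _) (measure_mono hsub)
      _ = F r - F s := by
          rw [hF, hF, measure_diff hsub2 (hmeas s).nullMeasurableSet (hfin _),
            ENNReal.toReal_sub_of_le (measure_mono hsub2) (hfin _)]
  have htend : Tendsto (fun n : ℕ => F r - F (r - 1/(n+1))) atTop (nhds 0) := by
    have h1 : Tendsto (fun n : ℕ => r - 1/(n+1)) atTop (nhds r) := by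
      have := tendsto_one_div_add_atTop_nhds_zero_nat (𝕜 := ℝ)
      have h2 := (tendsto_const_nhds (x := r) (f := atTop (α := ℕ))).sub this
      simpa using h2
    have h3 := (hc.tendsto.comp h1)
    have h4 := (tendsto_const_nhds (x := F r) (f := atTop (α := ℕ))).sub h3
    simpa using h4
  have hle : (μ {x : ℂ | ‖x‖ = r}).toReal ≤ 0 := by
    refine ge_of_tendsto htend (Eventually.of_forall fun n => ?_)
    refine key _ ?_
    have : (0:ℝ) < 1/(n+1) := by positivity
    linarith
  have : (μ {x : ℂ | ‖x‖ = r}).toReal = 0 := le_antisymm hle ENNReal.toReal_nonneg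
  rcases (ENNReal.toReal_eq_zero_iff _).mp this with h | h
  · exact h
  · exact absurd h (hfin _)

private lemma mainCalc (μ : Measure ℂ) [IsProbabilityMeasure μ]
    (hsym : ∀ θ : ℝ, μ.map (fun z => Complex.exp (θ * Complex.I) * z) = μ)
    (F : ℝ → ℝ) (hF : ∀ r, F r = (μ {x : ℂ | ‖x‖ ≤ r}).toReal) (z : ℂ)
    (hc : ContinuousAt F ‖z‖)
    (hint : Integrable (fun x => (z - x)⁻¹) μ) :
    ∫ x, (z - x)⁻¹ ∂μ = (μ {x : ℂ | ‖x‖ < ‖z‖}).toReal • (z)⁻¹ := by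
  set g : ℂ → ℂ := fun x => (z - x)⁻¹ with hg
  set ν : Measure ℝ := volume.restrict (Ioc (0:ℝ) (2*π)) with hν
  have hνuniv : ν Set.univ = ENNReal.ofReal (2*π) := by
    rw [hν, Measure.restrict_apply_univ, Real.volume_Ioc, sub_zero]
  -- measurability of the two-variable function
  have hHm : AEStronglyMeasurable (fun p : ℝ × ℂ => g (Complex.exp (p.1 * Complex.I) * p.2))
      (ν.prod μ) := by
    apply Measurable.aestronglyMeasurable
    apply Measurable.inv
    exact (continuous_const.sub ((Complex.continuous_exp.comp
      ((Complex.continuous_ofReal.comp continuous_fst).mul continuous_const)).mul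
      continuous_snd)).measurable
  -- integrability on the product
  have hH : Integrable (fun p : ℝ × ℂ => g (Complex.exp (p.1 * Complex.I) * p.2)) (ν.prod μ) := by
    refine (integrable_prod_iff hHm).2 ⟨?_, ?_⟩
    · exact Eventually.of_forall fun θ => (rot_integral μ hsym g θ).2 hint
    · have hconst : ∀ θ : ℝ, (∫ x, ‖g (Complex.exp (θ * Complex.I) * x)‖ ∂μ)
          = ∫ x, ‖g x‖ ∂μ := fun θ => (rot_integral μ hsym (fun x => ‖g x‖) θ).1
      refine (integrable_const (∫ x, ‖g x‖ ∂μ)).congr ?_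
      exact Eventually.of_forall fun θ => (hconst θ).symm
  -- Fubini
  have hswap : (∫ θ, (∫ x, g (Complex.exp (θ * Complex.I) * x) ∂μ) ∂ν)
      = ∫ x, (∫ θ, g (Complex.exp (θ * Complex.I) * x) ∂ν) ∂μ :=
    integral_integral_swap hH
  -- LHS of hswap is (2π) • ∫ g
  have hlhs : (∫ θ, (∫ x, g (Complex.exp (θ * Complex.I) * x) ∂μ) ∂ν)
      = (2*π) • ∫ x, g x ∂μ := by
    have : ∀ θ : ℝ, (∫ x, g (Complex.exp (θ * Complex.I) * x) ∂μ) = ∫ x, g x ∂μ :=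
      fun θ => (rot_integral μ hsym g θ).1
    simp_rw [this]
    rw [MeasureTheory.integral_const, measureReal_def, hνuniv, ENNReal.toReal_ofReal (by positivity)]
  -- RHS of hswap: compute inner integral a.e.
  have hS : μ {x : ℂ | ‖x‖ = ‖z‖} = 0 := sphereNull μ F hF ‖z‖ hc
  have hae : ∀ᵐ x ∂μ, ‖x‖ ≠ ‖z‖ := by
    rw [ae_iff]
    convert hS using 2
    ext x
    simp
  have hrhs : (∫ x, (∫ θ, g (Complex.exp (θ * Complex.I) * x) ∂ν) ∂μ)
      = (μ {x : ℂ | ‖x‖ < ‖z‖}).toReal • ((2*π)/z) := by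
    have hB : MeasurableSet {x : ℂ | ‖x‖ < ‖z‖} :=
      (isOpen_lt continuous_norm continuous_const).measurableSet
    have h1 : (∫ x, (∫ θ, g (Complex.exp (θ * Complex.I) * x) ∂ν) ∂μ)
        = ∫ x, ({x : ℂ | ‖x‖ < ‖z‖}.indicator (fun _ => (2*π)/z) x) ∂μ := by
      apply MeasureTheory.integral_congr_ae
      filter_upwards [hae] with x hx
      have : (∫ θ, g (Complex.exp (θ * Complex.I) * x) ∂ν)
          = ∫ θ in (0:ℝ)..(2*π), (z - Complex.exp (θ * Complex.I) * x)⁻¹ := by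
        rw [intervalIntegral.integral_of_le Real.two_pi_pos.le]
      rw [this, circleAvg z x hx, Set.indicator_apply]
      simp only [mem_setOf_eq]
    rw [h1, MeasureTheory.integral_indicator hB, setIntegral_const, measureReal_def]
  rw [← hswap, hlhs] at hrhs
  have h2π : ((2*π : ℝ) : ℂ) ≠ 0 := by
    simp only [ne_eq, Complex.ofReal_eq_zero]
    positivity
  rw [Complex.real_smul, Complex.real_smul] at hrhs
  set m : ℂ := ((μ {x : ℂ | ‖x‖ < ‖z‖}).toReal : ℂ) with hm
  have hsolve : (∫ x, g x ∂μ) = (((2*π:ℝ):ℂ))⁻¹ * (m * (2*(π:ℂ)/z)) := by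
    rw [← hrhs, ← mul_assoc, inv_mul_cancel₀ h2π, one_mul]
  rw [Complex.real_smul, ← hm, hsolve, div_eq_mul_inv]
  rw [show (((2*π:ℝ):ℂ))⁻¹ * (m * (2*(π:ℂ) * z⁻¹))
      = ((((2*π:ℝ):ℂ))⁻¹ * ((2*π:ℝ):ℂ)) * (m * z⁻¹) by push_cast; ring,
    inv_mul_cancel₀ h2π, one_mul]

/-- Computation of the Cauchy–Stieltjes transform of a radially symmetric measure:
`m_μ(z) = F_R(|z|)/z` at nonzero continuity points `|z|` of the radial c.d.f.,
and `m_μ(0) = 0` if `0` is a continuity point. -/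
theorem stieltjes_transform_radial (μ : Measure ℂ) [IsProbabilityMeasure μ]
    (hsym : ∀ θ : ℝ, μ.map (fun z => Complex.exp (θ * Complex.I) * z) = μ)
    (F : ℝ → ℝ) (hF : ∀ r, F r = (μ {x : ℂ | ‖x‖ ≤ r}).toReal) :
    (∀ z : ℂ, z ≠ 0 → ContinuousAt F ‖z‖ →
      Integrable (fun x => (z - x)⁻¹) μ →
      ∫ x, (z - x)⁻¹ ∂μ = (F ‖z‖ : ℂ) / z) ∧
    (ContinuousAt F 0 → Integrable (fun x : ℂ => ((0 : ℂ) - x)⁻¹) μ →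
      ∫ x, ((0 : ℂ) - x)⁻¹ ∂μ = 0) := by
  constructor
  · intro z hz hc hint
    rw [mainCalc μ hsym F hF z hc hint]
    have hS := sphereNull μ F hF ‖z‖ hc
    have hBC : μ {x : ℂ | ‖x‖ < ‖z‖} = μ {x : ℂ | ‖x‖ ≤ ‖z‖} := by
      refine _root_.le_antisymm (measure_mono fun x (hx : ‖x‖ < ‖z‖) => (le_of_lt hx : ‖x‖ ≤ ‖z‖)) ?_
      calc μ {x : ℂ | ‖x‖ ≤ ‖z‖}
          ≤ μ ({x : ℂ | ‖x‖ < ‖z‖} ∪ {x : ℂ | ‖x‖ = ‖z‖}) :=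
            measure_mono (fun x (hx : ‖x‖ ≤ ‖z‖) => (lt_or_eq_of_le hx : ‖x‖ < ‖z‖ ∨ ‖x‖ = ‖z‖))
        _ ≤ μ {x : ℂ | ‖x‖ < ‖z‖} + μ {x : ℂ | ‖x‖ = ‖z‖} := measure_union_le _ _
        _ = μ {x : ℂ | ‖x‖ < ‖z‖} := by rw [hS, add_zero]
    rw [hBC, ← hF, Complex.real_smul, div_eq_mul_inv]
  · intro hc hint
    have hc' : ContinuousAt F ‖(0:ℂ)‖ := by simpa using hc
    rw [mainCalc μ hsym F hF 0 hc' hint]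
    simp
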